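/- arXiv:2604.10921 — 2 statements merged into one kernel-verified Lean document; each statement's English description precedes it below -/
import Mathlib

section
/- Let q ∈ (0,1], ε ∈ [0,1], F : ℝ^{2d} → ℂ and ψ : ℝ^d → ℂ measurable, Q(j) = j + [0,1]^d, Q₂(ι) = ι + [−2,2]^d, and Ω₁, Ω₂ ⊆ ℤ^d. Then Σ_{ι∈Ω₁} sup_{j∈ℤ^d} ( Σ_{κ∈Ω₂} ess sup_{(x,ξ,η)∈Q(j)×Q(ι)×Q(κ)} |F(x, ξ−εη) ψ(η)| )^q ≤ Σ_{κ∈Ω₂} ( Σ_{ι∈Ω₁} ‖F‖_{L^∞(ℝ^d × Q₂(ι − ⌊εκ⌋))}^q ) ‖ψ‖_{L^∞(Q(κ))}^q, where ⌊x⌋ denotes the componentwise integer part. -/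
open MeasureTheory
open scoped ENNReal

namespace Stmt9

variable (d : ℕ)

/-- `x ∈ Q(j) = j + [0,1]^d`. -/
def inQ (j : Fin d → ℤ) (x : Fin d → ℝ) : Prop :=
  ∀ i, (j i : ℝ) ≤ x i ∧ x i ≤ (j i : ℝ) + 1

/-- `x ∈ Q₂(ι) = ι + [-2,2]^d`. -/
def inQ2 (ι : Fin d → ℤ) (x : Fin d → ℝ) : Prop :=
  ∀ i, (ι i : ℝ) - 2 ≤ x i ∧ x i ≤ (ι i : ℝ) + 2

/-- Componentwise integer part of `ε·κ`. -/
noncomputable def epsFloor (ε : ℝ) (κ : Fin d → ℤ) : Fin d → ℤ := fun i => ⌊ε * (κ i : ℝ)⌋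

-- measurability
lemma measQ (j : Fin d → ℤ) : MeasurableSet {x : Fin d → ℝ | inQ d j x} := by
  have : {x : Fin d → ℝ | inQ d j x}
      = ⋂ i, (fun x : Fin d → ℝ => x i) ⁻¹' Set.Icc ((j i : ℝ)) ((j i : ℝ) + 1) := by
    ext x; simp [inQ, Set.mem_iInter, Set.mem_Icc]
  rw [this]
  exact MeasurableSet.iInter fun i => (measurable_pi_apply i) measurableSet_Icc

lemma measQ2 (ι : Fin d → ℤ) : MeasurableSet {x : Fin d → ℝ | inQ2 d ι x} := by
  have : {x : Fin d → ℝ | inQ2 d ι x}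
      = ⋂ i, (fun x : Fin d → ℝ => x i) ⁻¹' Set.Icc ((ι i : ℝ) - 2) ((ι i : ℝ) + 2) := by
    ext x; simp [inQ2, Set.mem_iInter, Set.mem_Icc]
  rw [this]
  exact MeasurableSet.iInter fun i => (measurable_pi_apply i) measurableSet_Icc

-- geometry
lemma geom {ε : ℝ} (hε0 : 0 ≤ ε) (hε1 : ε ≤ 1) (ι κ : Fin d → ℤ) {ξ η : Fin d → ℝ}
    (hξ : inQ d ι ξ) (hη : inQ d κ η) : inQ2 d (ι - epsFloor d ε κ) (ξ - ε • η) := by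
  intro i
  have h1 : ε * (κ i : ℝ) ≤ ε * η i := mul_le_mul_of_nonneg_left (hη i).1 hε0
  have h2 : ε * η i ≤ ε * (κ i : ℝ) + ε := by nlinarith [(hη i).2]
  have h3 := Int.floor_le (ε * (κ i : ℝ))
  have h4 := Int.lt_floor_add_one (ε * (κ i : ℝ))
  have hπ : ((ι - epsFloor d ε κ) i : ℝ) = (ι i : ℝ) - (⌊ε * (κ i : ℝ)⌋ : ℝ) := by
    simp [epsFloor, Pi.sub_apply]
  have hσ : (ξ - ε • η) i = ξ i - ε * η i := by
    simp [Pi.sub_apply, Pi.smul_apply, smul_eq_mul]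
  rw [hπ, hσ]
  constructor <;> linarith [(hξ i).1, (hξ i).2]

-- null set transfer
lemma null1 {ε : ℝ} {N : Set ((Fin d → ℝ) × (Fin d → ℝ))} (hN : MeasurableSet N)
    (h0 : volume N = 0) :
    volume {p : (Fin d → ℝ) × (Fin d → ℝ) × (Fin d → ℝ) |
      (p.1, p.2.1 - ε • p.2.2) ∈ N} = 0 := by
  have sk : MeasurePreserving
      (fun p : (Fin d → ℝ) × (Fin d → ℝ) => (p.1, p.2 - ε • p.1)) volume volume := by
    rw [show (volume : Measure ((Fin d → ℝ) × (Fin d → ℝ)))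
        = Measure.prod volume volume from rfl]
    exact MeasurePreserving.skew_product (μa := volume) (μb := volume) (μc := volume)
      (μd := volume) (MeasurePreserving.id volume)
      (measurable_snd.sub (measurable_fst.const_smul ε))
      (Filter.Eventually.of_forall fun a => by
        simpa [sub_eq_add_neg] using
          map_add_right_eq_self (volume : Measure (Fin d → ℝ)) (-(ε • a)))
  have shear : MeasurePreserving
      (fun p : (Fin d → ℝ) × (Fin d → ℝ) => (p.1 - ε • p.2, p.2)) volume volume := by
    have h := (Measure.measurePreserving_swap
        (μ := (volume : Measure (Fin d → ℝ))) (ν := volume)).comp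
      (sk.comp (Measure.measurePreserving_swap
        (μ := (volume : Measure (Fin d → ℝ))) (ν := volume)))
    convert h using 1 <;> rfl
  have Φ : MeasurePreserving
      (Prod.map (id : (Fin d → ℝ) → (Fin d → ℝ))
        (fun p : (Fin d → ℝ) × (Fin d → ℝ) => (p.1 - ε • p.2, p.2))) volume volume := by
    rw [show (volume : Measure ((Fin d → ℝ) × ((Fin d → ℝ) × (Fin d → ℝ))))
        = Measure.prod volume volume from rfl]
    exact (MeasurePreserving.id volume).prod shear
  have hS0 : MeasurableSet
      {p : (Fin d → ℝ) × (Fin d → ℝ) × (Fin d → ℝ) | (p.1, p.2.1) ∈ N} :=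
    (measurable_fst.prodMk (measurable_fst.comp measurable_snd)) hN
  have hvol0 : volume {p : (Fin d → ℝ) × (Fin d → ℝ) × (Fin d → ℝ) | (p.1, p.2.1) ∈ N} = 0 := by
    have hpre : (MeasurableEquiv.prodAssoc :
        ((Fin d → ℝ) × (Fin d → ℝ)) × (Fin d → ℝ) ≃ᵐ
          (Fin d → ℝ) × (Fin d → ℝ) × (Fin d → ℝ)) ⁻¹'
        {p : (Fin d → ℝ) × (Fin d → ℝ) × (Fin d → ℝ) | (p.1, p.2.1) ∈ N}
        = N ×ˢ Set.univ := by
      ext q; simp [MeasurableEquiv.prodAssoc, Set.mem_prod]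
    have h2 := (volume_preserving_prodAssoc (α₁ := Fin d → ℝ) (β₁ := Fin d → ℝ)
      (γ₁ := Fin d → ℝ)).measure_preimage hS0.nullMeasurableSet
    rw [hpre] at h2
    rw [← h2, show (volume : Measure (((Fin d → ℝ) × (Fin d → ℝ)) × (Fin d → ℝ)))
        = Measure.prod volume volume from rfl, Measure.prod_prod, h0, zero_mul]
  have hpre2 : (Prod.map (id : (Fin d → ℝ) → (Fin d → ℝ))
      (fun p : (Fin d → ℝ) × (Fin d → ℝ) => (p.1 - ε • p.2, p.2))) ⁻¹'
      {p : (Fin d → ℝ) × (Fin d → ℝ) × (Fin d → ℝ) | (p.1, p.2.1) ∈ N}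
      = {p : (Fin d → ℝ) × (Fin d → ℝ) × (Fin d → ℝ) | (p.1, p.2.1 - ε • p.2.2) ∈ N} := by
    ext p; simp [Prod.map]
  rw [← hpre2, Φ.measure_preimage hS0.nullMeasurableSet]
  exact hvol0

lemma null2 {M : Set (Fin d → ℝ)} (hM : MeasurableSet M) (h0 : volume M = 0) :
    volume {p : (Fin d → ℝ) × (Fin d → ℝ) × (Fin d → ℝ) | p.2.2 ∈ M} = 0 := by
  have h : {p : (Fin d → ℝ) × (Fin d → ℝ) × (Fin d → ℝ) | p.2.2 ∈ M}
      = Set.univ ×ˢ (Set.univ ×ˢ M) := by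
    ext p; simp [Set.mem_prod]
  rw [h, show (volume : Measure ((Fin d → ℝ) × ((Fin d → ℝ) × (Fin d → ℝ))))
      = Measure.prod volume volume from rfl, Measure.prod_prod,
    show (volume : Measure ((Fin d → ℝ) × (Fin d → ℝ)))
      = Measure.prod volume volume from rfl, Measure.prod_prod, h0, mul_zero, mul_zero]

-- rpow subadditivity for tsum
lemma tsum_rpow_le {α : Type*} (f : α → ℝ≥0∞) {q : ℝ} (hq0 : 0 < q) (hq1 : q ≤ 1) :
    (∑' a, f a) ^ q ≤ ∑' a, f a ^ q := by
  rw [ENNReal.tsum_eq_iSup_sum]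
  rw [Monotone.map_iSup_of_continuousAt (f := fun x : ℝ≥0∞ => x ^ q)
    (ENNReal.continuous_rpow_const.continuousAt)
    (ENNReal.monotone_rpow_of_nonneg hq0.le)
    (by simp [ENNReal.zero_rpow_of_pos hq0])]
  refine iSup_le fun s => ?_
  calc (∑ a ∈ s, f a) ^ q ≤ ∑ a ∈ s, f a ^ q := by
        classical
        induction s using Finset.cons_induction with
        | empty => simp [ENNReal.zero_rpow_of_pos hq0]
        | cons a s ha ih =>
          rw [Finset.sum_cons, Finset.sum_cons]
          exact le_trans (ENNReal.rpow_add_le_add_rpow _ _ hq0.le hq1)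
            (add_le_add_right ih _)
    _ ≤ ∑' a, f a ^ q := ENNReal.sum_le_tsum s

-- key per-cube estimate
lemma key {ε : ℝ} (hε0 : 0 ≤ ε) (hε1 : ε ≤ 1)
    (F : (Fin d → ℝ) × (Fin d → ℝ) → ℂ) (ψ : (Fin d → ℝ) → ℂ)
    (j ι κ : Fin d → ℤ) :
    essSup
      (fun p : (Fin d → ℝ) × (Fin d → ℝ) × (Fin d → ℝ) =>
        ((‖F (p.1, p.2.1 - ε • p.2.2)‖₊ : ℝ≥0∞) * (‖ψ p.2.2‖₊ : ℝ≥0∞)))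
      (volume.restrict {p | inQ d j p.1 ∧ inQ d ι p.2.1 ∧ inQ d κ p.2.2})
    ≤ (essSup (fun p : (Fin d → ℝ) × (Fin d → ℝ) => (‖F p‖₊ : ℝ≥0∞))
        (volume.restrict {p | inQ2 d (ι - epsFloor d ε κ) p.2}))
      * (essSup (fun η => (‖ψ η‖₊ : ℝ≥0∞)) (volume.restrict {η | inQ d κ η})) := by
  set B := essSup (fun p : (Fin d → ℝ) × (Fin d → ℝ) => (‖F p‖₊ : ℝ≥0∞))
    (volume.restrict {p | inQ2 d (ι - epsFloor d ε κ) p.2}) with hB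
  set C := essSup (fun η => (‖ψ η‖₊ : ℝ≥0∞)) (volume.restrict {η | inQ d κ η}) with hC
  have hR : MeasurableSet {p : (Fin d → ℝ) × (Fin d → ℝ) | inQ2 d (ι - epsFloor d ε κ) p.2} :=
    (measQ2 d _).preimage measurable_snd
  have hQκ : MeasurableSet {η : Fin d → ℝ | inQ d κ η} := measQ d κ
  have hS : MeasurableSet
      {p : (Fin d → ℝ) × (Fin d → ℝ) × (Fin d → ℝ) |
        inQ d j p.1 ∧ inQ d ι p.2.1 ∧ inQ d κ p.2.2} := by
    refine MeasurableSet.inter ((measQ d j).preimage measurable_fst) ?_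
    exact MeasurableSet.inter
      ((measQ d ι).preimage (measurable_fst.comp measurable_snd))
      ((measQ d κ).preimage (measurable_snd.comp measurable_snd))
  -- null set for F
  have hFa : ∀ᵐ z ∂(volume.restrict {p : (Fin d → ℝ) × (Fin d → ℝ) |
      inQ2 d (ι - epsFloor d ε κ) p.2}), (‖F z‖₊ : ℝ≥0∞) ≤ B :=
    ENNReal.ae_le_essSup _
  have hN0 : volume ({z : (Fin d → ℝ) × (Fin d → ℝ) | ¬ (‖F z‖₊ : ℝ≥0∞) ≤ B}
      ∩ {p | inQ2 d (ι - epsFloor d ε κ) p.2}) = 0 := by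
    have h := ae_iff.mp hFa
    rwa [Measure.restrict_apply' hR] at h
  set N := toMeasurable volume ({z : (Fin d → ℝ) × (Fin d → ℝ) | ¬ (‖F z‖₊ : ℝ≥0∞) ≤ B}
      ∩ {p | inQ2 d (ι - epsFloor d ε κ) p.2}) with hNdef
  have hNm : MeasurableSet N := measurableSet_toMeasurable _ _
  have hN : volume N = 0 := by rw [hNdef, measure_toMeasurable]; exact hN0
  have h1 : volume {p : (Fin d → ℝ) × (Fin d → ℝ) × (Fin d → ℝ) |
      (p.1, p.2.1 - ε • p.2.2) ∈ N} = 0 := null1 d hNm hN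
  -- null set for ψ
  have hψa : ∀ᵐ η ∂(volume.restrict {η : Fin d → ℝ | inQ d κ η}), (‖ψ η‖₊ : ℝ≥0∞) ≤ C :=
    ENNReal.ae_le_essSup _
  have hM0 : volume ({η : Fin d → ℝ | ¬ (‖ψ η‖₊ : ℝ≥0∞) ≤ C} ∩ {η | inQ d κ η}) = 0 := by
    have h := ae_iff.mp hψa
    rwa [Measure.restrict_apply' hQκ] at h
  set M := toMeasurable volume ({η : Fin d → ℝ | ¬ (‖ψ η‖₊ : ℝ≥0∞) ≤ C}
      ∩ {η | inQ d κ η}) with hMdef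
  have hMm : MeasurableSet M := measurableSet_toMeasurable _ _
  have hM : volume M = 0 := by rw [hMdef, measure_toMeasurable]; exact hM0
  have h2 : volume {p : (Fin d → ℝ) × (Fin d → ℝ) × (Fin d → ℝ) | p.2.2 ∈ M} = 0 :=
    null2 d hMm hM
  -- combine
  refine essSup_le_of_ae_le _ ?_
  have h1' : ∀ᵐ p ∂(volume.restrict {p : (Fin d → ℝ) × (Fin d → ℝ) × (Fin d → ℝ) |
      inQ d j p.1 ∧ inQ d ι p.2.1 ∧ inQ d κ p.2.2}),
      (p.1, p.2.1 - ε • p.2.2) ∉ N :=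
    (ae_mono Measure.restrict_le_self) (measure_eq_zero_iff_ae_notMem.mp h1)
  have h2' : ∀ᵐ p ∂(volume.restrict {p : (Fin d → ℝ) × (Fin d → ℝ) × (Fin d → ℝ) |
      inQ d j p.1 ∧ inQ d ι p.2.1 ∧ inQ d κ p.2.2}), p.2.2 ∉ M :=
    (ae_mono Measure.restrict_le_self) (measure_eq_zero_iff_ae_notMem.mp h2)
  filter_upwards [ae_restrict_mem hS, h1', h2'] with p hp hp1 hp2
  obtain ⟨hpj, hpι, hpκ⟩ := hp
  have hgeo : inQ2 d (ι - epsFloor d ε κ) (p.2.1 - ε • p.2.2) := geom d hε0 hε1 ι κ hpι hpκ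
  have hFle : (‖F (p.1, p.2.1 - ε • p.2.2)‖₊ : ℝ≥0∞) ≤ B := by
    by_contra hcon
    exact hp1 (subset_toMeasurable _ _ ⟨hcon, hgeo⟩)
  have hψle : (‖ψ p.2.2‖₊ : ℝ≥0∞) ≤ C := by
    by_contra hcon
    exact hp2 (subset_toMeasurable _ _ ⟨hcon, hpκ⟩)
  exact mul_le_mul' hFle hψle


/-- The discretized sup-estimate (Lemma on sup estimates): for `0 < q ≤ 1`,
`ε ∈ [0,1]` and subsets `Ω₁, Ω₂ ⊆ ℤ^d`,
the left-hand side involving `ess sup` over cubes of `|F(x, ξ−εη) ψ(η)|` is bounded by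
the right-hand side involving `‖F‖_{L^∞(ℝ^d × Q₂(ι−⌊εκ⌋))}` and `‖ψ‖_{L^∞(Q(κ))}`. -/
theorem sup_estimates (q ε : ℝ) (hq0 : 0 < q) (hq1 : q ≤ 1)
    (hε0 : 0 ≤ ε) (hε1 : ε ≤ 1)
    (F : (Fin d → ℝ) × (Fin d → ℝ) → ℂ) (ψ : (Fin d → ℝ) → ℂ)
    (Ω₁ Ω₂ : Set (Fin d → ℤ)) :
    (∑' ι : Ω₁, ⨆ j : Fin d → ℤ,
        (∑' κ : Ω₂,
          essSup
            (fun p : (Fin d → ℝ) × (Fin d → ℝ) × (Fin d → ℝ) =>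
              ((‖F (p.1, p.2.1 - ε • p.2.2)‖₊ : ℝ≥0∞) * (‖ψ p.2.2‖₊ : ℝ≥0∞)))
            (volume.restrict
              {p | inQ d j p.1 ∧ inQ d (ι : Fin d → ℤ) p.2.1 ∧ inQ d (κ : Fin d → ℤ) p.2.2}))
          ^ q)
      ≤
    ∑' κ : Ω₂,
      (∑' ι : Ω₁,
          (essSup (fun p : (Fin d → ℝ) × (Fin d → ℝ) => (‖F p‖₊ : ℝ≥0∞))
            (volume.restrict
              {p | inQ2 d ((ι : Fin d → ℤ) - epsFloor d ε (κ : Fin d → ℤ)) p.2})) ^ q)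
        * (essSup (fun η => (‖ψ η‖₊ : ℝ≥0∞))
            (volume.restrict {η | inQ d (κ : Fin d → ℤ) η})) ^ q := by
  refine le_trans (ENNReal.tsum_le_tsum fun ι => iSup_le fun j =>
    ENNReal.rpow_le_rpow (ENNReal.tsum_le_tsum fun κ =>
      key d hε0 hε1 F ψ j (ι : Fin d → ℤ) (κ : Fin d → ℤ)) hq0.le) ?_
  refine le_trans (ENNReal.tsum_le_tsum fun ι => tsum_rpow_le _ hq0 hq1) ?_
  rw [ENNReal.tsum_comm]
  refine ENNReal.tsum_le_tsum fun κ => ?_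
  rw [← ENNReal.tsum_mul_right]
  exact ENNReal.tsum_le_tsum fun ι =>
    le_of_eq (ENNReal.mul_rpow_of_nonneg _ _ hq0.le)


end Stmt9
end

section
/- Let q₁, q₂, q₀ ∈ (0,∞] with 1/q₁ + 1/q₂ = 1/q₀, and F₁, F₂ : ℝ^d × ℝ^d → [0,∞) measurable with ‖F₁‖_{L^{∞,q₁}} < ∞ and ‖F₂‖_{L^{1,q₂}} < ∞, where ‖F‖_{L^{p,q}} = ‖ ξ ↦ ‖F(·,ξ)‖_{L^p} ‖_{L^q}. If moreover (∫ (sup_{|y|≥R} F₁(y,ξ))^{q₁} dξ)^{1/q₁} → 0 as R → ∞, then for G(x,ξ) = ∫ F₁(y,ξ) F₂(x−y,ξ) dy one has (∫ (sup_{|x|≥R} G(x,ξ))^{q₀} dξ)^{1/q₀} → 0 as R → ∞, provided additionally (∫ (∫_{|y|≥R} F₂(y,ξ) dy)^{q₂} dξ)^{1/q₂} → 0 as R → ∞. -/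
open MeasureTheory Filter Topology
open scoped ENNReal

namespace Stmt13

variable (d : ℕ)

/-- The `L^q`-quasi-norm of an `ℝ≥0∞`-valued function, with the sup-modification
(essential supremum) when `q = ∞`. -/
noncomputable def lqNorm (q : ℝ≥0∞) {α : Type*} [MeasurableSpace α]
    (g : α → ℝ≥0∞) (μ : Measure α) : ℝ≥0∞ :=
  if q = ∞ then essSup g μ
  else (∫⁻ x, (g x) ^ q.toReal ∂μ) ^ (1 / q.toReal)

/-- The mixed norm `‖F‖_{L^{p,q}}` of a nonnegative `F` on `ℝ^d × ℝ^d`. -/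
noncomputable def mixedNorm (p q : ℝ≥0∞)
    (F : EuclideanSpace ℝ (Fin d) → EuclideanSpace ℝ (Fin d) → ℝ≥0∞) : ℝ≥0∞ :=
  lqNorm q (fun ξ => lqNorm p (fun x => F x ξ) volume) volume

section Aux

variable {α : Type*} [MeasurableSpace α] {μ : Measure α}

lemma lqNorm_top (g : α → ℝ≥0∞) (μ : Measure α) : lqNorm ∞ g μ = essSup g μ := if_pos rfl

lemma lqNorm_of_ne_top {q : ℝ≥0∞} (hq : q ≠ ∞) (g : α → ℝ≥0∞) (μ : Measure α) :
    lqNorm q g μ = (∫⁻ x, (g x) ^ q.toReal ∂μ) ^ (1 / q.toReal) := if_neg hq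

lemma lqNorm_one (g : α → ℝ≥0∞) (μ : Measure α) : lqNorm 1 g μ = ∫⁻ x, g x ∂μ := by
  rw [lqNorm_of_ne_top ENNReal.one_ne_top]
  simp [ENNReal.toReal_one]

lemma essSup_le_iff'' (g : α → ℝ≥0∞) (c : ℝ≥0∞) :
    essSup g μ ≤ c ↔ μ {a | c < g a} = 0 := by
  constructor
  · intro h
    have h1 : ∀ᵐ a ∂μ, g a ≤ c := (ENNReal.ae_le_essSup g).mono fun a ha => ha.trans h
    rw [ae_iff] at h1
    simpa [not_le] using h1
  · intro h
    refine essSup_le_of_ae_le c ?_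
    rw [Filter.EventuallyLE, ae_iff]
    simpa [not_le] using h

lemma measurable_essSup_snd {β : Type*} [MeasurableSpace β] [SFinite μ]
    {f : α × β → ℝ≥0∞} (hf : Measurable f) :
    Measurable fun b => essSup (fun a => f (a, b)) μ := by
  apply measurable_of_Iic
  intro c
  have hs : MeasurableSet {p : β × α | c < f (p.2, p.1)} :=
    measurableSet_lt measurable_const (hf.comp measurable_swap)
  have hm : Measurable fun b => μ (Prod.mk b ⁻¹' {p : β × α | c < f (p.2, p.1)}) :=
    measurable_measure_prodMk_left hs
  have heq : (fun b => essSup (fun a => f (a, b)) μ) ⁻¹' Set.Iic c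
      = (fun b => μ (Prod.mk b ⁻¹' {p : β × α | c < f (p.2, p.1)})) ⁻¹' {0} := by
    ext b
    simp only [Set.mem_preimage, Set.mem_Iic, Set.mem_singleton_iff]
    rw [essSup_le_iff'']
    rfl
  rw [heq]
  exact hm (measurableSet_singleton 0)

lemma young_eps {a a₁ a₂ : ℝ} (ha : 0 < a) (h1 : 0 < a₁) (h2 : 0 < a₂)
    (hsum : a₁⁻¹ + a₂⁻¹ = a⁻¹) (ε : ℝ≥0∞) (hε0 : ε ≠ 0) (hεt : ε ≠ ∞) :
    ∃ C : ℝ≥0∞, C ≠ ∞ ∧ ∀ x y : ℝ≥0∞, (x * y) ^ a ≤ C * x ^ a₁ + ε * y ^ a₂ := by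
  set p := a₁ / a with hp
  set q := a₂ / a with hqdef
  have haa1 : a < a₁ := by
    have h' : a₁⁻¹ < a⁻¹ := by
      have : 0 < a₂⁻¹ := by positivity
      linarith
    exact (inv_lt_inv₀ h1 ha).1 h'
  have haa2 : a < a₂ := by
    have h' : a₂⁻¹ < a⁻¹ := by
      have : 0 < a₁⁻¹ := by positivity
      linarith
    exact (inv_lt_inv₀ h2 ha).1 h'
  have hpq : p.HolderConjugate q := by
    rw [Real.holderConjugate_iff]; constructor
    · exact (one_lt_div ha).2 haa1
    · rw [hp, hqdef, inv_div, inv_div, div_add_div _ _ h1.ne' h2.ne',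
        div_eq_one_iff_eq (by positivity)]
      field_simp at hsum
      nlinarith [hsum]
  have hq0 : 0 < q := by positivity
  have hp0 : 0 < p := by positivity
  set lam : ℝ≥0∞ := ε ^ (-(1 / q)) with hlam
  have hlam0 : lam ≠ 0 := by
    rw [hlam, Ne, ENNReal.rpow_eq_zero_iff]
    rintro (⟨h0, -⟩ | ⟨ht, -⟩)
    · exact hε0 h0
    · exact hεt ht
  have hlamt : lam ≠ ∞ := by
    rw [hlam, Ne, ENNReal.rpow_eq_top_iff]
    rintro (⟨h0, -⟩ | ⟨ht, -⟩)
    · exact hε0 h0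
    · exact hεt ht
  refine ⟨lam ^ p / ENNReal.ofReal p, ?_, ?_⟩
  · exact (ENNReal.div_lt_top (ENNReal.rpow_ne_top_of_nonneg hp0.le hlamt)
      (by simp [ENNReal.ofReal_eq_zero, not_le, hp0])).ne
  intro x y
  have key : x ^ a * y ^ a = (lam * x ^ a) * (lam⁻¹ * y ^ a) := by
    rw [mul_mul_mul_comm, ENNReal.mul_inv_cancel hlam0 hlamt, one_mul]
  calc (x * y) ^ a = x ^ a * y ^ a := ENNReal.mul_rpow_of_nonneg _ _ ha.le
    _ = (lam * x ^ a) * (lam⁻¹ * y ^ a) := key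
    _ ≤ (lam * x ^ a) ^ p / ENNReal.ofReal p + (lam⁻¹ * y ^ a) ^ q / ENNReal.ofReal q :=
        ENNReal.young_inequality _ _ hpq
    _ ≤ lam ^ p / ENNReal.ofReal p * x ^ a₁ + ε * y ^ a₂ := by
        refine add_le_add ?_ ?_
        · rw [ENNReal.mul_rpow_of_nonneg _ _ hp0.le, ← ENNReal.rpow_mul x a p]
          have hap : a * p = a₁ := by rw [hp]; field_simp
          rw [hap]
          refine le_of_eq ?_
          rw [div_eq_mul_inv, div_eq_mul_inv]; ring
        · rw [ENNReal.mul_rpow_of_nonneg _ _ hq0.le, ← ENNReal.rpow_mul y a q]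
          have haq : a * q = a₂ := by rw [hqdef]; field_simp
          have hlq : lam⁻¹ ^ q = ε := by
            rw [ENNReal.inv_rpow, hlam, ← ENNReal.rpow_mul]
            have : -(1 / q) * q = -1 := by field_simp
            rw [this, ENNReal.rpow_neg_one, inv_inv]
          rw [haq, hlq]
          refine (ENNReal.div_le_iff ?_ ?_).2 ?_
          · simp [ENNReal.ofReal_eq_zero, not_le, hq0]
          · exact ENNReal.ofReal_ne_top
          · refine le_mul_of_one_le_right' ?_
            rw [← ENNReal.ofReal_one]
            exact ENNReal.ofReal_le_ofReal hpq.symm.lt.le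

lemma add_rpow_le (x y : ℝ≥0∞) {a : ℝ} (ha : 0 ≤ a) :
    (x + y) ^ a ≤ 2 ^ a * (x ^ a + y ^ a) := by
  have h1 : x + y ≤ 2 * (x ⊔ y) := by
    rw [two_mul]; exact add_le_add le_sup_left le_sup_right
  calc (x + y) ^ a ≤ (2 * (x ⊔ y)) ^ a := ENNReal.rpow_le_rpow h1 ha
    _ = 2 ^ a * (x ⊔ y) ^ a := ENNReal.mul_rpow_of_nonneg _ _ ha
    _ ≤ 2 ^ a * (x ^ a + y ^ a) := by
        gcongr
        rcases le_total x y with h | h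
        · rw [sup_eq_right.2 h]; exact le_add_self
        · rw [sup_eq_left.2 h]; exact le_self_add

lemma tendsto_zero_rpow {ι : Type*} {l : Filter ι} {f : ι → ℝ≥0∞} {c : ℝ} (hc : 0 < c)
    (h : Tendsto f l (𝓝 0)) : Tendsto (fun i => f i ^ c) l (𝓝 0) := by
  rw [ENNReal.tendsto_nhds_zero] at h ⊢
  intro ε hε
  have hne : ε ^ (1 / c) ≠ 0 := by
    rw [Ne, ENNReal.rpow_eq_zero_iff]
    rintro (⟨h0, -⟩ | ⟨-, hlt⟩)
    · exact hε.ne' h0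
    · exact absurd (one_div_pos.2 hc) (by linarith)
  filter_upwards [h _ (pos_iff_ne_zero.2 hne)] with i hi
  calc f i ^ c ≤ (ε ^ (1 / c)) ^ c := ENNReal.rpow_le_rpow hi hc.le
    _ = ε := by rw [← ENNReal.rpow_mul, one_div, inv_mul_cancel₀ hc.ne', ENNReal.rpow_one]

lemma tendsto_int_of_lq {f : ℝ → ℝ≥0∞} {c : ℝ} (hc : 0 < c)
    (h : Tendsto (fun R => f R ^ (1 / c)) atTop (𝓝 0)) : Tendsto f atTop (𝓝 0) := by
  have h2 := tendsto_zero_rpow hc h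
  have heq : ∀ R, (f R ^ (1 / c)) ^ c = f R := fun R => by
    rw [← ENNReal.rpow_mul, one_div, inv_mul_cancel₀ hc.ne', ENNReal.rpow_one]
  simp only [heq] at h2
  exact h2

/-- The abstract core of the argument. -/
lemma core (μ : Measure α)
    (q₀ q₁ q₂ : ℝ≥0∞) (h₀ : 0 < q₀) (h₁ : 0 < q₁) (h₂ : 0 < q₂)
    (hq : q₁⁻¹ + q₂⁻¹ = q₀⁻¹)
    (T u v : ℝ → α → ℝ≥0∞) (A B : α → ℝ≥0∞)
    (hAmeas : Measurable A) (hBmeas : Measurable B)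
    (hvmeas : ∀ R, Measurable (v R))
    (hA : lqNorm q₁ A μ < ∞) (hB : lqNorm q₂ B μ < ∞)
    (hu : Tendsto (fun R => lqNorm q₁ (u R) μ) atTop (𝓝 0))
    (hv : Tendsto (fun R => lqNorm q₂ (v R) μ) atTop (𝓝 0))
    (hT : ∀ R : ℝ, 0 ≤ R → ∀ ξ, T (2 * R) ξ ≤ u R ξ * B ξ + A ξ * v R ξ) :
    Tendsto (fun R => lqNorm q₀ (T R) μ) atTop (𝓝 0) := by
  suffices hmain : Tendsto (fun R => lqNorm q₀ (T (2 * R)) μ) atTop (𝓝 0) by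
    have hdiv : Tendsto (fun R : ℝ => R / 2) atTop atTop :=
      tendsto_id.atTop_div_const two_pos
    have hcomp := hmain.comp hdiv
    have heq : ((fun R => lqNorm q₀ (T (2 * R)) μ) ∘ fun R : ℝ => R / 2)
        = fun R => lqNorm q₀ (T R) μ := by
      funext R
      simp only [Function.comp_apply]
      rw [show (2:ℝ) * (R / 2) = R by ring]
    rwa [heq] at hcomp
  by_cases hq0t : q₀ = ∞
  · -- all exponents infinite
    have hq1t : q₁ = ∞ := by
      rw [hq0t, ENNReal.inv_top] at hq
      exact ENNReal.inv_eq_zero.1 (add_eq_zero.1 hq).1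
    have hq2t : q₂ = ∞ := by
      rw [hq0t, ENNReal.inv_top] at hq
      exact ENNReal.inv_eq_zero.1 (add_eq_zero.1 hq).2
    subst hq0t; subst hq1t; subst hq2t
    simp only [lqNorm_top] at hu hv hA hB ⊢
    have hh : Tendsto (fun R => essSup (u R) μ * essSup B μ + essSup A μ * essSup (v R) μ)
        atTop (𝓝 0) := by
      have t1 : Tendsto (fun R => essSup (u R) μ * essSup B μ) atTop (𝓝 0) := by
        simpa using ENNReal.Tendsto.mul_const hu (Or.inr hB.ne)
      have t2 : Tendsto (fun R => essSup A μ * essSup (v R) μ) atTop (𝓝 0) := by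
        simpa using ENNReal.Tendsto.const_mul hv (Or.inr hA.ne)
      simpa using t1.add t2
    refine tendsto_of_tendsto_of_tendsto_of_le_of_le' tendsto_const_nhds hh
      (Eventually.of_forall fun R => zero_le) ?_
    filter_upwards [eventually_ge_atTop (0:ℝ)] with R hR
    calc essSup (T (2 * R)) μ ≤ essSup (u R * B + A * v R) μ :=
          essSup_mono_ae (Eventually.of_forall fun ξ => by simpa using hT R hR ξ)
      _ ≤ essSup (u R * B) μ + essSup (A * v R) μ := ENNReal.essSup_add_le _ _
      _ ≤ essSup (u R) μ * essSup B μ + essSup A μ * essSup (v R) μ :=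
          add_le_add (ENNReal.essSup_mul_le _ _) (ENNReal.essSup_mul_le _ _)
  · -- q₀ finite
    have ha : 0 < q₀.toReal := ENNReal.toReal_pos h₀.ne' hq0t
    set a := q₀.toReal with hadef
    have h2a0 : (2:ℝ≥0∞) ^ a ≠ 0 := (ENNReal.rpow_pos (by norm_num) (by norm_num)).ne'
    have h2at : (2:ℝ≥0∞) ^ a ≠ ∞ := (ENNReal.rpow_lt_top_of_nonneg ha.le (by norm_num)).ne
    simp only [lqNorm_of_ne_top hq0t]
    suffices hpsi : Tendsto (fun R => ∫⁻ ξ, T (2 * R) ξ ^ a ∂μ) atTop (𝓝 0) by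
      exact tendsto_zero_rpow (one_div_pos.2 ha) hpsi
    by_cases hq1t : q₁ = ∞
    · -- case (ii) : q₁ = ∞, q₂ = q₀
      have hq2 : q₂ = q₀ := by
        rw [hq1t, ENNReal.inv_top, zero_add] at hq
        have := congrArg (·⁻¹) hq
        simpa using this
      subst hq2
      rw [hq1t] at hu hA
      simp only [lqNorm_top] at hu hA
      simp only [lqNorm_of_ne_top hq0t] at hv hB
      have hMv : Tendsto (fun R => ∫⁻ ξ, v R ξ ^ a ∂μ) atTop (𝓝 0) := tendsto_int_of_lq ha hv
      have hMB : (∫⁻ ξ, B ξ ^ a ∂μ) ≠ ∞ :=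
        ((ENNReal.rpow_lt_top_iff_of_pos (one_div_pos.2 ha)).1 hB).ne
      have heAa : essSup A μ ^ a ≠ ∞ := (ENNReal.rpow_lt_top_of_nonneg ha.le hA.ne).ne
      have hh : Tendsto (fun R => 2 ^ a *
          (essSup (u R) μ ^ a * (∫⁻ ξ, B ξ ^ a ∂μ) + essSup A μ ^ a * ∫⁻ ξ, v R ξ ^ a ∂μ))
          atTop (𝓝 0) := by
        have t1 : Tendsto (fun R => essSup (u R) μ ^ a * ∫⁻ ξ, B ξ ^ a ∂μ) atTop (𝓝 0) := by
          simpa using ENNReal.Tendsto.mul_const (tendsto_zero_rpow ha hu) (Or.inr hMB)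
        have t2 : Tendsto (fun R => essSup A μ ^ a * ∫⁻ ξ, v R ξ ^ a ∂μ) atTop (𝓝 0) := by
          simpa using ENNReal.Tendsto.const_mul hMv (Or.inr heAa)
        have := ENNReal.Tendsto.const_mul (t1.add t2) (Or.inr h2at)
        simpa using this
      refine tendsto_of_tendsto_of_tendsto_of_le_of_le' tendsto_const_nhds hh
        (Eventually.of_forall fun R => zero_le) ?_
      filter_upwards [eventually_ge_atTop (0:ℝ)] with R hR
      have hae : ∀ᵐ ξ ∂μ, T (2 * R) ξ ^ a ≤
          2 ^ a * (essSup (u R) μ ^ a * B ξ ^ a + essSup A μ ^ a * v R ξ ^ a) := by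
        filter_upwards [ENNReal.ae_le_essSup (u R), ENNReal.ae_le_essSup A] with ξ hu1 hA1
        calc T (2 * R) ξ ^ a ≤ (u R ξ * B ξ + A ξ * v R ξ) ^ a :=
              ENNReal.rpow_le_rpow (hT R hR ξ) ha.le
          _ ≤ (essSup (u R) μ * B ξ + essSup A μ * v R ξ) ^ a := by
              refine ENNReal.rpow_le_rpow ?_ ha.le
              exact add_le_add (mul_le_mul_left hu1 _) (mul_le_mul_left hA1 _)
          _ ≤ 2 ^ a * ((essSup (u R) μ * B ξ) ^ a + (essSup A μ * v R ξ) ^ a) :=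
              add_rpow_le _ _ ha.le
          _ = 2 ^ a * (essSup (u R) μ ^ a * B ξ ^ a + essSup A μ ^ a * v R ξ ^ a) := by
              rw [ENNReal.mul_rpow_of_nonneg _ _ ha.le, ENNReal.mul_rpow_of_nonneg _ _ ha.le]
      calc ∫⁻ ξ, T (2 * R) ξ ^ a ∂μ
          ≤ ∫⁻ ξ, 2 ^ a * (essSup (u R) μ ^ a * B ξ ^ a + essSup A μ ^ a * v R ξ ^ a) ∂μ :=
            lintegral_mono_ae hae
        _ = 2 ^ a * (essSup (u R) μ ^ a * (∫⁻ ξ, B ξ ^ a ∂μ)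
              + essSup A μ ^ a * ∫⁻ ξ, v R ξ ^ a ∂μ) := by
            rw [lintegral_const_mul _ ((measurable_const.fun_mul (hBmeas.pow_const a)).fun_add
              (measurable_const.fun_mul ((hvmeas R).pow_const a))),
              lintegral_add_left (measurable_const.fun_mul (hBmeas.pow_const a)),
              lintegral_const_mul _ (hBmeas.pow_const a),
              lintegral_const_mul _ ((hvmeas R).pow_const a)]
    · by_cases hq2t : q₂ = ∞
      · -- case (iii) : q₂ = ∞, q₁ = q₀
        have hq1 : q₁ = q₀ := by
          rw [hq2t, ENNReal.inv_top, add_zero] at hq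
          have := congrArg (·⁻¹) hq
          simpa using this
        subst hq1
        rw [hq2t] at hv hB
        simp only [lqNorm_top] at hv hB
        simp only [lqNorm_of_ne_top hq0t] at hu hA
        have hMu : Tendsto (fun R => ∫⁻ ξ, u R ξ ^ a ∂μ) atTop (𝓝 0) := tendsto_int_of_lq ha hu
        have hMA : (∫⁻ ξ, A ξ ^ a ∂μ) ≠ ∞ :=
          ((ENNReal.rpow_lt_top_iff_of_pos (one_div_pos.2 ha)).1 hA).ne
        have heBa : essSup B μ ^ a ≠ ∞ := (ENNReal.rpow_lt_top_of_nonneg ha.le hB.ne).ne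
        have hh : Tendsto (fun R => 2 ^ a *
            (essSup B μ ^ a * (∫⁻ ξ, u R ξ ^ a ∂μ) + essSup (v R) μ ^ a * ∫⁻ ξ, A ξ ^ a ∂μ))
            atTop (𝓝 0) := by
          have t1 : Tendsto (fun R => essSup B μ ^ a * ∫⁻ ξ, u R ξ ^ a ∂μ) atTop (𝓝 0) := by
            simpa using ENNReal.Tendsto.const_mul hMu (Or.inr heBa)
          have t2 : Tendsto (fun R => essSup (v R) μ ^ a * ∫⁻ ξ, A ξ ^ a ∂μ) atTop (𝓝 0) := by
            simpa using ENNReal.Tendsto.mul_const (tendsto_zero_rpow ha hv) (Or.inr hMA)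
          have := ENNReal.Tendsto.const_mul (t1.add t2) (Or.inr h2at)
          simpa using this
        refine tendsto_of_tendsto_of_tendsto_of_le_of_le' tendsto_const_nhds hh
          (Eventually.of_forall fun R => zero_le) ?_
        filter_upwards [eventually_ge_atTop (0:ℝ)] with R hR
        have hae : ∀ᵐ ξ ∂μ, T (2 * R) ξ ^ a ≤
            2 ^ a * (essSup B μ ^ a * u R ξ ^ a + essSup (v R) μ ^ a * A ξ ^ a) := by
          filter_upwards [ENNReal.ae_le_essSup B, ENNReal.ae_le_essSup (v R)] with ξ hB1 hv1
          calc T (2 * R) ξ ^ a ≤ (u R ξ * B ξ + A ξ * v R ξ) ^ a :=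
                ENNReal.rpow_le_rpow (hT R hR ξ) ha.le
            _ ≤ (u R ξ * essSup B μ + A ξ * essSup (v R) μ) ^ a := by
                refine ENNReal.rpow_le_rpow ?_ ha.le
                exact add_le_add (mul_le_mul_right hB1 _) (mul_le_mul_right hv1 _)
            _ ≤ 2 ^ a * ((u R ξ * essSup B μ) ^ a + (A ξ * essSup (v R) μ) ^ a) :=
                add_rpow_le _ _ ha.le
            _ = 2 ^ a * (essSup B μ ^ a * u R ξ ^ a + essSup (v R) μ ^ a * A ξ ^ a) := by
                rw [ENNReal.mul_rpow_of_nonneg _ _ ha.le, ENNReal.mul_rpow_of_nonneg _ _ ha.le]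
                ring
        calc ∫⁻ ξ, T (2 * R) ξ ^ a ∂μ
            ≤ ∫⁻ ξ, 2 ^ a * (essSup B μ ^ a * u R ξ ^ a + essSup (v R) μ ^ a * A ξ ^ a) ∂μ :=
              lintegral_mono_ae hae
          _ = 2 ^ a * (essSup B μ ^ a * (∫⁻ ξ, u R ξ ^ a ∂μ)
                + essSup (v R) μ ^ a * ∫⁻ ξ, A ξ ^ a ∂μ) := by
              rw [lintegral_const_mul' _ _ h2at,
                lintegral_add_right _ (measurable_const.fun_mul (hAmeas.pow_const a)),
                lintegral_const_mul' _ _ heBa,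
                lintegral_const_mul _ (hAmeas.pow_const a)]
      · -- case (iv) : all finite
        have ha1 : 0 < q₁.toReal := ENNReal.toReal_pos h₁.ne' hq1t
        have ha2 : 0 < q₂.toReal := ENNReal.toReal_pos h₂.ne' hq2t
        set a₁ := q₁.toReal with ha1def
        set a₂ := q₂.toReal with ha2def
        have hsum : a₁⁻¹ + a₂⁻¹ = a⁻¹ := by
          have h := congrArg ENNReal.toReal hq
          rwa [ENNReal.toReal_add (ENNReal.inv_ne_top.2 h₁.ne') (ENNReal.inv_ne_top.2 h₂.ne'),
            ENNReal.toReal_inv, ENNReal.toReal_inv, ENNReal.toReal_inv] at h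
        simp only [lqNorm_of_ne_top hq1t] at hu hA
        simp only [lqNorm_of_ne_top hq2t] at hv hB
        have hMu : Tendsto (fun R => ∫⁻ ξ, u R ξ ^ a₁ ∂μ) atTop (𝓝 0) := tendsto_int_of_lq ha1 hu
        have hMv : Tendsto (fun R => ∫⁻ ξ, v R ξ ^ a₂ ∂μ) atTop (𝓝 0) := tendsto_int_of_lq ha2 hv
        have hMA : (∫⁻ ξ, A ξ ^ a₁ ∂μ) ≠ ∞ :=
          ((ENNReal.rpow_lt_top_iff_of_pos (one_div_pos.2 ha1)).1 hA).ne
        have hMB : (∫⁻ ξ, B ξ ^ a₂ ∂μ) ≠ ∞ :=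
          ((ENNReal.rpow_lt_top_iff_of_pos (one_div_pos.2 ha2)).1 hB).ne
        rw [ENNReal.tendsto_nhds_zero]
        intro ε hε
        set ε1 := min ε 1 with hε1def
        have hε10 : ε1 ≠ 0 := (lt_min hε zero_lt_one).ne'
        have hε1t : ε1 ≠ ∞ := ne_top_of_le_ne_top ENNReal.one_ne_top (min_le_right _ _)
        set κ := ε1 / 2 / 2 with hκdef
        have h2ne : (2:ℝ≥0∞) ≠ 0 := by norm_num
        have h2net : (2:ℝ≥0∞) ≠ ∞ := by norm_num
        have hκ0 : κ ≠ 0 := by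
          rw [hκdef, Ne, ENNReal.div_eq_zero_iff, ENNReal.div_eq_zero_iff]
          push_neg
          exact ⟨⟨hε10, h2net⟩, h2net⟩
        have hκt : κ ≠ ∞ := by
          rw [hκdef]
          exact (ENNReal.div_lt_top ((ENNReal.div_lt_top hε1t h2ne).ne) h2ne).ne
        set MB := ∫⁻ ξ, B ξ ^ a₂ ∂μ with hMBdef
        set MA := ∫⁻ ξ, A ξ ^ a₁ ∂μ with hMAdef
        set s := κ * (2 ^ a)⁻¹ * (MB + 1)⁻¹ with hsdef
        set t := κ * (2 ^ a)⁻¹ * (MA + 1)⁻¹ with htdef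
        have hMB1 : MB + 1 ≠ ∞ := ENNReal.add_ne_top.2 ⟨hMB, ENNReal.one_ne_top⟩
        have hMA1 : MA + 1 ≠ ∞ := ENNReal.add_ne_top.2 ⟨hMA, ENNReal.one_ne_top⟩
        have hMB10 : MB + 1 ≠ 0 := by simp
        have hMA10 : MA + 1 ≠ 0 := by simp
        have hs0 : s ≠ 0 :=
          mul_ne_zero (mul_ne_zero hκ0 (ENNReal.inv_ne_zero.2 h2at)) (ENNReal.inv_ne_zero.2 hMB1)
        have hst : s ≠ ∞ :=
          ENNReal.mul_ne_top (ENNReal.mul_ne_top hκt (ENNReal.inv_ne_top.2 h2a0))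
            (ENNReal.inv_ne_top.2 hMB10)
        have ht0 : t ≠ 0 :=
          mul_ne_zero (mul_ne_zero hκ0 (ENNReal.inv_ne_zero.2 h2at)) (ENNReal.inv_ne_zero.2 hMA1)
        have htt : t ≠ ∞ :=
          ENNReal.mul_ne_top (ENNReal.mul_ne_top hκt (ENNReal.inv_ne_top.2 h2a0))
            (ENNReal.inv_ne_top.2 hMA10)
        obtain ⟨Cs, hCst, hys⟩ := young_eps ha ha1 ha2 hsum s hs0 hst
        obtain ⟨Ct, hCtt, hyt⟩ := young_eps ha ha2 ha1 (by rw [add_comm]; exact hsum) t ht0 htt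
        set K₁ := 2 ^ a * Cs with hK₁def
        set K₂ := 2 ^ a * Ct with hK₂def
        have hK₁t : K₁ ≠ ∞ := ENNReal.mul_ne_top h2at hCst
        have hK₂t : K₂ ≠ ∞ := ENNReal.mul_ne_top h2at hCtt
        have hK₁1t : K₁ + 1 ≠ ∞ := ENNReal.add_ne_top.2 ⟨hK₁t, ENNReal.one_ne_top⟩
        have hK₂1t : K₂ + 1 ≠ ∞ := ENNReal.add_ne_top.2 ⟨hK₂t, ENNReal.one_ne_top⟩
        have hη₁ : κ * (K₁ + 1)⁻¹ ≠ 0 := mul_ne_zero hκ0 (ENNReal.inv_ne_zero.2 hK₁1t)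
        have hη₂ : κ * (K₂ + 1)⁻¹ ≠ 0 := mul_ne_zero hκ0 (ENNReal.inv_ne_zero.2 hK₂1t)
        filter_upwards [ENNReal.tendsto_nhds_zero.1 hMu _ (pos_iff_ne_zero.2 hη₁),
          ENNReal.tendsto_nhds_zero.1 hMv _ (pos_iff_ne_zero.2 hη₂),
          eventually_ge_atTop (0:ℝ)] with R hRu hRv hR
        have hpoint : ∀ ξ, T (2 * R) ξ ^ a ≤
            K₁ * u R ξ ^ a₁ + (2 ^ a * (s * B ξ ^ a₂) + (K₂ * v R ξ ^ a₂
              + 2 ^ a * (t * A ξ ^ a₁))) := by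
          intro ξ
          calc T (2 * R) ξ ^ a ≤ (u R ξ * B ξ + A ξ * v R ξ) ^ a :=
                ENNReal.rpow_le_rpow (hT R hR ξ) ha.le
            _ ≤ 2 ^ a * ((u R ξ * B ξ) ^ a + (A ξ * v R ξ) ^ a) := add_rpow_le _ _ ha.le
            _ ≤ 2 ^ a * ((Cs * u R ξ ^ a₁ + s * B ξ ^ a₂)
                  + (Ct * v R ξ ^ a₂ + t * A ξ ^ a₁)) := by
                gcongr
                · exact hys _ _
                · rw [mul_comm (A ξ)]; exact hyt _ _
            _ = K₁ * u R ξ ^ a₁ + (2 ^ a * (s * B ξ ^ a₂) + (K₂ * v R ξ ^ a₂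
                  + 2 ^ a * (t * A ξ ^ a₁))) := by
                rw [hK₁def, hK₂def]; ring
        have hmeas2 : Measurable fun ξ => 2 ^ a * (s * B ξ ^ a₂) + (K₂ * v R ξ ^ a₂
            + 2 ^ a * (t * A ξ ^ a₁)) :=
          (measurable_const.mul (measurable_const.mul (hBmeas.pow_const a₂))).add
            ((measurable_const.mul ((hvmeas R).pow_const a₂)).add
              (measurable_const.mul (measurable_const.mul (hAmeas.pow_const a₁))))
        have hint : ∫⁻ ξ, T (2 * R) ξ ^ a ∂μ ≤
            K₁ * (∫⁻ ξ, u R ξ ^ a₁ ∂μ) + (2 ^ a * (s * MB) + (K₂ * (∫⁻ ξ, v R ξ ^ a₂ ∂μ)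
              + 2 ^ a * (t * MA))) := by
          refine le_trans (lintegral_mono hpoint) ?_
          rw [lintegral_add_right _ hmeas2]
          refine add_le_add ?_ ?_
          · rw [lintegral_const_mul' _ _ hK₁t]
          · rw [lintegral_add_left (measurable_const.fun_mul (measurable_const.fun_mul
                (hBmeas.pow_const a₂))),
              lintegral_add_left (measurable_const.fun_mul ((hvmeas R).pow_const a₂)),
              lintegral_const_mul _ (measurable_const.fun_mul (hBmeas.pow_const a₂)),
              lintegral_const_mul _ (hBmeas.pow_const a₂),
              lintegral_const_mul _ ((hvmeas R).pow_const a₂),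
              lintegral_const_mul _ (measurable_const.fun_mul (hAmeas.pow_const a₁)),
              lintegral_const_mul _ (hAmeas.pow_const a₁)]
        have b1 : K₁ * (∫⁻ ξ, u R ξ ^ a₁ ∂μ) ≤ κ := by
          calc K₁ * (∫⁻ ξ, u R ξ ^ a₁ ∂μ) ≤ (K₁ + 1) * (κ * (K₁ + 1)⁻¹) :=
                mul_le_mul' le_self_add hRu
            _ = κ * ((K₁ + 1) * (K₁ + 1)⁻¹) := by ring
            _ = κ := by
                rw [ENNReal.mul_inv_cancel (by simp) hK₁1t, mul_one]
        have b3 : K₂ * (∫⁻ ξ, v R ξ ^ a₂ ∂μ) ≤ κ := by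
          calc K₂ * (∫⁻ ξ, v R ξ ^ a₂ ∂μ) ≤ (K₂ + 1) * (κ * (K₂ + 1)⁻¹) :=
                mul_le_mul' le_self_add hRv
            _ = κ * ((K₂ + 1) * (K₂ + 1)⁻¹) := by ring
            _ = κ := by
                rw [ENNReal.mul_inv_cancel (by simp) hK₂1t, mul_one]
        have b2 : 2 ^ a * (s * MB) ≤ κ := by
          rw [hsdef]
          calc 2 ^ a * (κ * (2 ^ a)⁻¹ * (MB + 1)⁻¹ * MB)
              = κ * ((2:ℝ≥0∞) ^ a * (2 ^ a)⁻¹) * ((MB + 1)⁻¹ * MB) := by ring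
            _ ≤ κ * 1 * 1 := by
                refine mul_le_mul' (mul_le_mul' le_rfl ?_) ?_
                · exact le_of_eq (ENNReal.mul_inv_cancel h2a0 h2at)
                · calc (MB + 1)⁻¹ * MB ≤ (MB + 1)⁻¹ * (MB + 1) :=
                      mul_le_mul_right le_self_add _
                    _ = 1 := ENNReal.inv_mul_cancel hMB10 hMB1
            _ = κ := by ring
        have b4 : 2 ^ a * (t * MA) ≤ κ := by
          rw [htdef]
          calc 2 ^ a * (κ * (2 ^ a)⁻¹ * (MA + 1)⁻¹ * MA)
              = κ * ((2:ℝ≥0∞) ^ a * (2 ^ a)⁻¹) * ((MA + 1)⁻¹ * MA) := by ring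
            _ ≤ κ * 1 * 1 := by
                refine mul_le_mul' (mul_le_mul' le_rfl ?_) ?_
                · exact le_of_eq (ENNReal.mul_inv_cancel h2a0 h2at)
                · calc (MA + 1)⁻¹ * MA ≤ (MA + 1)⁻¹ * (MA + 1) :=
                      mul_le_mul_right le_self_add _
                    _ = 1 := ENNReal.inv_mul_cancel hMA10 hMA1
            _ = κ := by ring
        calc ∫⁻ ξ, T (2 * R) ξ ^ a ∂μ
            ≤ K₁ * (∫⁻ ξ, u R ξ ^ a₁ ∂μ) + (2 ^ a * (s * MB) + (K₂ * (∫⁻ ξ, v R ξ ^ a₂ ∂μ)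
              + 2 ^ a * (t * MA))) := hint
          _ ≤ κ + (κ + (κ + κ)) := add_le_add b1 (add_le_add b2 (add_le_add b3 b4))
          _ = (κ + κ) + (κ + κ) := by ring
          _ = ε1 / 2 + ε1 / 2 := by rw [hκdef, ENNReal.add_halves]
          _ = ε1 := ENNReal.add_halves ε1
          _ ≤ ε := min_le_left _ _

end Aux

set_option maxHeartbeats 1000000 in
/-- Convolution of two nonnegative mixed-norm functions inherits vanishing tails:
if `F₁ ∈ L^{∞,q₁}` has vanishing tails and `F₂ ∈ L^{1,q₂}` has vanishing integral
tails, `1/q₁ + 1/q₂ = 1/q₀`, then `G(x,ξ) = ∫ F₁(y,ξ) F₂(x−y,ξ) dy` has vanishing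
tails in `L^{∞,q₀}`-sense. -/
theorem conv_tail_vanishes (q₀ q₁ q₂ : ℝ≥0∞)
    (h₀ : 0 < q₀) (h₁ : 0 < q₁) (h₂ : 0 < q₂)
    (hq : q₁⁻¹ + q₂⁻¹ = q₀⁻¹)
    (F₁ F₂ : EuclideanSpace ℝ (Fin d) → EuclideanSpace ℝ (Fin d) → ℝ≥0∞)
    (hF₁meas : Measurable (fun p : EuclideanSpace ℝ (Fin d) × EuclideanSpace ℝ (Fin d) => F₁ p.1 p.2))
    (hF₂meas : Measurable (fun p : EuclideanSpace ℝ (Fin d) × EuclideanSpace ℝ (Fin d) => F₂ p.1 p.2))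
    (hF₁ : mixedNorm d ∞ q₁ F₁ < ∞)
    (hF₂ : mixedNorm d 1 q₂ F₂ < ∞)
    (hF₁tail : Tendsto (fun R : ℝ =>
        lqNorm q₁ (fun ξ => ⨆ y ∈ {y : EuclideanSpace ℝ (Fin d) | R ≤ ‖y‖}, F₁ y ξ) volume)
        atTop (𝓝 0))
    (hF₂tail : Tendsto (fun R : ℝ =>
        lqNorm q₂ (fun ξ => ∫⁻ y in {y : EuclideanSpace ℝ (Fin d) | R ≤ ‖y‖}, F₂ y ξ) volume)
        atTop (𝓝 0)) :
    Tendsto (fun R : ℝ =>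
        lqNorm q₀ (fun ξ => ⨆ x ∈ {x : EuclideanSpace ℝ (Fin d) | R ≤ ‖x‖},
            ∫⁻ y, F₁ y ξ * F₂ (x - y) ξ) volume)
      atTop (𝓝 0) := by
  have hS : ∀ R : ℝ, MeasurableSet {y : EuclideanSpace ℝ (Fin d) | R ≤ ‖y‖} :=
    fun R => measurableSet_le measurable_const measurable_norm
  refine core volume q₀ q₁ q₂ h₀ h₁ h₂ hq
    (fun R ξ => ⨆ x ∈ {x : EuclideanSpace ℝ (Fin d) | R ≤ ‖x‖}, ∫⁻ y, F₁ y ξ * F₂ (x - y) ξ)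
    (fun R ξ => ⨆ y ∈ {y : EuclideanSpace ℝ (Fin d) | R ≤ ‖y‖}, F₁ y ξ)
    (fun R ξ => ∫⁻ y in {y : EuclideanSpace ℝ (Fin d) | R ≤ ‖y‖}, F₂ y ξ)
    (fun ξ => essSup (fun y => F₁ y ξ) volume)
    (fun ξ => ∫⁻ y, F₂ y ξ)
    ?_ ?_ ?_ ?_ ?_ ?_ ?_ ?_
  · -- A measurable
    exact measurable_essSup_snd (f := fun p => F₁ p.1 p.2) hF₁meas
  · -- B measurable
    exact Measurable.lintegral_prod_right' (f := fun p => F₂ p.2 p.1) (hF₂meas.comp measurable_swap)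
  · -- v R measurable
    intro R
    have heq : (fun ξ => ∫⁻ y in {y : EuclideanSpace ℝ (Fin d) | R ≤ ‖y‖}, F₂ y ξ)
        = fun ξ => ∫⁻ y,
            (Prod.snd ⁻¹' {y : EuclideanSpace ℝ (Fin d) | R ≤ ‖y‖}).indicator
              (fun p : EuclideanSpace ℝ (Fin d) × EuclideanSpace ℝ (Fin d) => F₂ p.2 p.1) (ξ, y) := by
      funext ξ
      rw [← lintegral_indicator (hS R)]
      refine lintegral_congr fun y => ?_
      simp [Set.indicator_apply, Set.mem_preimage]
    show Measurable fun ξ => ∫⁻ y in {y : EuclideanSpace ℝ (Fin d) | R ≤ ‖y‖}, F₂ y ξ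
    rw [heq]
    exact Measurable.lintegral_prod_right'
      ((hF₂meas.comp measurable_swap).indicator (measurable_snd (hS R)))
  · -- hA
    simp only [mixedNorm, lqNorm_top] at hF₁
    exact hF₁
  · -- hB
    simp only [mixedNorm, lqNorm_one] at hF₂
    exact hF₂
  · exact hF₁tail
  · exact hF₂tail
  · -- the pointwise estimate
    intro R hR ξ
    refine iSup₂_le fun x hx => ?_
    have hxx : 2 * R ≤ ‖x‖ := hx
    have hf1 : Measurable fun y => F₁ y ξ := hF₁meas.comp (measurable_id.prodMk measurable_const)
    have hf2 : Measurable fun z => F₂ z ξ := hF₂meas.comp (measurable_id.prodMk measurable_const)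
    have hf2x : Measurable fun y => F₂ (x - y) ξ := hf2.comp (measurable_const.sub measurable_id)
    have hmp : MeasurePreserving (fun t : EuclideanSpace ℝ (Fin d) => x - t) volume volume :=
      Measure.measurePreserving_sub_left volume x
    rw [← lintegral_add_compl (fun y => F₁ y ξ * F₂ (x - y) ξ) (hS R)]
    refine add_le_add ?_ ?_
    · calc ∫⁻ y in {y : EuclideanSpace ℝ (Fin d) | R ≤ ‖y‖}, F₁ y ξ * F₂ (x - y) ξ ∂volume
          ≤ ∫⁻ y in {y : EuclideanSpace ℝ (Fin d) | R ≤ ‖y‖},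
              (⨆ y ∈ {y : EuclideanSpace ℝ (Fin d) | R ≤ ‖y‖}, F₁ y ξ) * F₂ (x - y) ξ ∂volume := by
            refine setLIntegral_mono (measurable_const.mul hf2x) fun y hy => ?_
            exact mul_le_mul_left (le_iSup₂ (f := fun y _ => F₁ y ξ) y hy) _
        _ ≤ ∫⁻ y, (⨆ y ∈ {y : EuclideanSpace ℝ (Fin d) | R ≤ ‖y‖}, F₁ y ξ)
              * F₂ (x - y) ξ ∂volume := setLIntegral_le_lintegral _ _
        _ = (⨆ y ∈ {y : EuclideanSpace ℝ (Fin d) | R ≤ ‖y‖}, F₁ y ξ)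
              * ∫⁻ y, F₂ (x - y) ξ ∂volume := lintegral_const_mul _ hf2x
        _ = (⨆ y ∈ {y : EuclideanSpace ℝ (Fin d) | R ≤ ‖y‖}, F₁ y ξ)
              * ∫⁻ y, F₂ y ξ ∂volume := by
            rw [show (∫⁻ y, F₂ (x - y) ξ ∂volume) = ∫⁻ y, F₂ y ξ ∂volume from
              hmp.lintegral_comp hf2]
    · have hae : ∀ᵐ y ∂(volume : Measure (EuclideanSpace ℝ (Fin d))),
          F₁ y ξ ≤ essSup (fun y => F₁ y ξ) volume := ENNReal.ae_le_essSup _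
      have hindm : Measurable fun y => essSup (fun y => F₁ y ξ) volume
          * ({y : EuclideanSpace ℝ (Fin d) | R ≤ ‖y‖}.indicator (fun z => F₂ z ξ)) (x - y) :=
        measurable_const.mul ((hf2.indicator (hS R)).comp (measurable_const.sub measurable_id))
      calc ∫⁻ y in {y : EuclideanSpace ℝ (Fin d) | R ≤ ‖y‖}ᶜ, F₁ y ξ * F₂ (x - y) ξ ∂volume
          ≤ ∫⁻ y in {y : EuclideanSpace ℝ (Fin d) | R ≤ ‖y‖}ᶜ,
              essSup (fun y => F₁ y ξ) volume
              * ({y : EuclideanSpace ℝ (Fin d) | R ≤ ‖y‖}.indicator (fun z => F₂ z ξ)) (x - y)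
              ∂volume := by
            refine setLIntegral_mono_ae hindm.aemeasurable ?_
            filter_upwards [hae] with y h1
            intro hy
            have hyS : x - y ∈ {y : EuclideanSpace ℝ (Fin d) | R ≤ ‖y‖} := by
              simp only [Set.mem_compl_iff, Set.mem_setOf_eq, not_le] at hy
              have h2 : ‖x‖ - ‖y‖ ≤ ‖x - y‖ := norm_sub_norm_le x y
              simp only [Set.mem_setOf_eq]
              linarith
            rw [Set.indicator_of_mem hyS]
            exact mul_le_mul' h1 le_rfl
        _ ≤ ∫⁻ y, essSup (fun y => F₁ y ξ) volume
              * ({y : EuclideanSpace ℝ (Fin d) | R ≤ ‖y‖}.indicator (fun z => F₂ z ξ)) (x - y)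
              ∂volume := setLIntegral_le_lintegral _ _
        _ = essSup (fun y => F₁ y ξ) volume
              * ∫⁻ y, ({y : EuclideanSpace ℝ (Fin d) | R ≤ ‖y‖}.indicator (fun z => F₂ z ξ)) (x - y)
              ∂volume :=
            lintegral_const_mul _ ((hf2.indicator (hS R)).comp (measurable_const.sub measurable_id))
        _ = essSup (fun y => F₁ y ξ) volume
              * ∫⁻ z, ({y : EuclideanSpace ℝ (Fin d) | R ≤ ‖y‖}.indicator (fun z => F₂ z ξ)) z
              ∂volume := by
            rw [show (∫⁻ y, ({y : EuclideanSpace ℝ (Fin d) | R ≤ ‖y‖}.indicator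
                (fun z => F₂ z ξ)) (x - y) ∂volume)
              = ∫⁻ z, ({y : EuclideanSpace ℝ (Fin d) | R ≤ ‖y‖}.indicator (fun z => F₂ z ξ)) z
                ∂volume from hmp.lintegral_comp (hf2.indicator (hS R))]
        _ = essSup (fun y => F₁ y ξ) volume
              * ∫⁻ y in {y : EuclideanSpace ℝ (Fin d) | R ≤ ‖y‖}, F₂ y ξ ∂volume := by
            rw [lintegral_indicator (hS R)]

end Stmt13
end
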